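/- Let 1 < p ≤ q < ∞, let σ_j → ∞ be a sequence of positive reals, and let φ: [0,∞) → [0,∞) be a C¹ convex function with φ(0) = 0 whose derivative φ' satisfies (inc)_{p-1} and (dec)_{q-1}. Define φ̄_j(t) := φ(t σ_j)/φ(σ_j). Then there is a subsequence (σ_{j_k}) such that φ̄_{j_k} converges uniformly on compact subsets of [0,∞) to a C¹ convex function φ_∞ whose derivative satisfies (inc)_{p-1} and (dec)_{q-1}. -/

import Mathlib

set_option maxHeartbeats 1000000
open Set Filter MeasureTheory intervalIntegral Topology

namespace Stmt12
variable {p q : ℝ} {φ φ' : ℝ → ℝ}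

lemma deriv_mono (hconv : ConvexOn ℝ (Set.Ici 0) φ)
    (hderiv : ∀ t : ℝ, 0 ≤ t → HasDerivWithinAt φ (φ' t) (Set.Ici 0) t)
    {s t : ℝ} (hs : 0 ≤ s) (hst : s ≤ t) : φ' s ≤ φ' t := by
  rcases eq_or_lt_of_le hst with rfl | h
  · exact le_rfl
  · have ht : (0:ℝ) ≤ t := hs.trans hst
    calc φ' s ≤ slope φ s t :=
          hconv.le_slope_of_hasDerivWithinAt hs ht h (hderiv s hs)
      _ ≤ φ' t := hconv.slope_le_of_hasDerivWithinAt hs ht h (hderiv t ht)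

lemma deriv_nonneg (hp : 1 < p) (hpq : p ≤ q)
    (hconv : ConvexOn ℝ (Set.Ici 0) φ)
    (hderiv : ∀ t : ℝ, 0 ≤ t → HasDerivWithinAt φ (φ' t) (Set.Ici 0) t)
    (hdec : ∀ s t : ℝ, 0 < s → s ≤ t → φ' t / t ^ (q-1) ≤ φ' s / s ^ (q-1))
    {t : ℝ} (ht : 0 < t) : 0 ≤ φ' t := by
  by_contra hneg
  push_neg at hneg
  have hq1 : (0:ℝ) < q - 1 := by linarith
  set c : ℝ := (2⁻¹ : ℝ) ^ (q-1)⁻¹ with hc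
  have hc0 : 0 < c := Real.rpow_pos_of_pos (by norm_num) _
  have hc1 : c < 1 := Real.rpow_lt_one (by norm_num) (by norm_num) (by positivity)
  have hcq : c ^ (q-1) = 2⁻¹ := Real.rpow_inv_rpow (by norm_num) (ne_of_gt hq1)
  set s := t * c with hs
  have hs0 : 0 < s := by positivity
  have hst : s ≤ t := by nlinarith
  have h1 : φ' s ≤ φ' t := deriv_mono hconv hderiv hs0.le hst
  have h2 := hdec s t hs0 hst
  rw [div_le_div_iff₀ (Real.rpow_pos_of_pos ht _) (Real.rpow_pos_of_pos hs0 _)] at h2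
  have hsq : s ^ (q-1) = t ^ (q-1) * 2⁻¹ := by
    rw [hs, Real.mul_rpow ht.le hc0.le, hcq]
  rw [hsq, ← mul_assoc] at h2
  have htq : (0:ℝ) < t ^ (q-1) := Real.rpow_pos_of_pos ht _
  have h3 : φ' t * 2⁻¹ ≤ φ' s := by
    have := (mul_le_mul_iff_of_pos_right htq).mp
      (by linarith [h2] : (φ' t * 2⁻¹) * t ^ (q-1) ≤ φ' s * t ^ (q-1))
    exact this
  nlinarith

lemma deriv_zero (hp : 1 < p)
    (hcont : ContinuousOn φ' (Set.Ici 0))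
    (hinc : ∀ s t : ℝ, 0 < s → s ≤ t → φ' s / s ^ (p-1) ≤ φ' t / t ^ (p-1))
    (hnonneg : ∀ t : ℝ, 0 < t → 0 ≤ φ' t) : φ' 0 = 0 := by
  have hp1 : (0:ℝ) < p - 1 := by linarith
  have h1 : Tendsto φ' (𝓝[>] (0:ℝ)) (𝓝 (φ' 0)) :=
    ((hcont 0 (mem_Ici.2 le_rfl)).tendsto).mono_left
      (nhdsWithin_mono 0 Ioi_subset_Ici_self)
  have hupper : Tendsto (fun x : ℝ => φ' 1 * x ^ (p-1)) (𝓝[>] (0:ℝ)) (𝓝 0) := by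
    have hc : ContinuousAt (fun x : ℝ => φ' 1 * x ^ (p-1)) 0 :=
      continuousAt_const.mul (Real.continuousAt_rpow_const 0 _ (Or.inr hp1.le))
    have := hc.tendsto.mono_left (nhdsWithin_le_nhds (s := Ioi (0:ℝ)))
    simpa [Real.zero_rpow (ne_of_gt hp1)] using this
  have h2 : Tendsto φ' (𝓝[>] (0:ℝ)) (𝓝 0) := by
    apply tendsto_of_tendsto_of_tendsto_of_le_of_le' tendsto_const_nhds hupper
    · filter_upwards [self_mem_nhdsWithin] with x hx
      exact hnonneg x hx
    · filter_upwards [Ioc_mem_nhdsGT (show (0:ℝ) < 1 by norm_num)] with x hx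
      have h := hinc x 1 hx.1 hx.2
      rw [div_le_div_iff₀ (Real.rpow_pos_of_pos hx.1 _) (Real.rpow_pos_of_pos one_pos _)] at h
      simpa [Real.one_rpow, mul_comm] using h
  exact tendsto_nhds_unique h1 h2

lemma ftc (hderiv : ∀ t : ℝ, 0 ≤ t → HasDerivWithinAt φ (φ' t) (Set.Ici 0) t)
    (hcont : ContinuousOn φ' (Set.Ici 0))
    {a b : ℝ} (ha : 0 ≤ a) (hab : a ≤ b) :
    ∫ y in a..b, φ' y = φ b - φ a := by
  apply integral_eq_sub_of_hasDeriv_right_of_le hab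
  · intro x hx
    exact ((hderiv x (ha.trans hx.1)).continuousWithinAt).mono
      (fun y hy => le_trans ha hy.1)
  · intro x hx
    exact (hderiv x (ha.trans hx.1.le)).mono
      (fun y (hy : x < y) => le_of_lt (lt_of_le_of_lt (ha.trans hx.1.le) hy))
  · apply (hcont.mono ?_).intervalIntegrable
    rw [uIcc_of_le hab]
    exact fun y hy => ha.trans hy.1

lemma key_bound (hp : 1 < p) (hpq : p ≤ q) (hφ0 : φ 0 = 0)
    (hderiv : ∀ t : ℝ, 0 ≤ t → HasDerivWithinAt φ (φ' t) (Set.Ici 0) t)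
    (hcont : ContinuousOn φ' (Set.Ici 0))
    (hdec : ∀ s t : ℝ, 0 < s → s ≤ t → φ' t / t ^ (q-1) ≤ φ' s / s ^ (q-1))
    (hφ'0 : φ' 0 = 0)
    {s : ℝ} (hs : 0 < s) : s * φ' s ≤ q * φ s := by
  have hq1 : (0:ℝ) < q - 1 := by linarith
  have hq0 : (0:ℝ) < q := by linarith
  have hsq : (0:ℝ) < s ^ (q-1) := Real.rpow_pos_of_pos hs _
  set c : ℝ := φ' s / s ^ (q-1) with hc
  have hint1 : IntervalIntegrable (fun u : ℝ => c * u ^ (q-1)) volume 0 s :=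
    (intervalIntegrable_rpow (Or.inl hq1.le)).const_mul c
  have hint2 : IntervalIntegrable φ' volume 0 s := by
    apply (hcont.mono ?_).intervalIntegrable
    rw [uIcc_of_le hs.le]; exact fun y hy => hy.1
  have hmono : ∫ u in (0:ℝ)..s, c * u ^ (q-1) ≤ ∫ u in (0:ℝ)..s, φ' u := by
    apply integral_mono_on hs.le hint1 hint2
    intro x hx
    rcases eq_or_lt_of_le hx.1 with rfl | hx0
    · simp [Real.zero_rpow (ne_of_gt hq1), hφ'0]
    · have h := hdec x s hx0 hx.2
      rw [div_le_div_iff₀ hsq (Real.rpow_pos_of_pos hx0 _)] at h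
      rw [hc, div_mul_eq_mul_div, div_le_iff₀ hsq]
      exact h
  have hval : ∫ u in (0:ℝ)..s, c * u ^ (q-1) = c * (s ^ q / q) := by
    rw [intervalIntegral.integral_const_mul, integral_rpow (Or.inl (by linarith))]
    rw [show q - 1 + 1 = q by ring, Real.zero_rpow (ne_of_gt hq0), sub_zero]
  have hftc : ∫ u in (0:ℝ)..s, φ' u = φ s := by
    rw [ftc hderiv hcont le_rfl hs.le, hφ0, sub_zero]
  rw [hval, hftc] at hmono
  have hcs : c * (s ^ q / q) = s * φ' s / q := by
    have hpow : s ^ q = s ^ (q-1) * s := by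
      nth_rewrite 1 [show q = q - 1 + 1 by ring]
      exact Real.rpow_add_one hs.ne' _
    rw [hc, hpow]
    field_simp
  rw [hcs] at hmono
  rw [div_le_iff₀ hq0] at hmono
  linarith [hmono]

lemma deriv_pos (hinc : ∀ s t : ℝ, 0 < s → s ≤ t → φ' s / s ^ (p-1) ≤ φ' t / t ^ (p-1))
    (hdec : ∀ s t : ℝ, 0 < s → s ≤ t → φ' t / t ^ (q-1) ≤ φ' s / s ^ (q-1))
    {s : ℝ} (hs : 0 < s) (hs' : 0 < φ' s) {t : ℝ} (ht : 0 < t) : 0 < φ' t := by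
  rcases le_total s t with h | h
  · have h2 : 0 < φ' t / t ^ (p-1) :=
      lt_of_lt_of_le (div_pos hs' (Real.rpow_pos_of_pos hs _)) (hinc s t hs h)
    have := mul_pos h2 (Real.rpow_pos_of_pos ht (p-1))
    rwa [div_mul_cancel₀] at this
    exact (Real.rpow_pos_of_pos ht _).ne'
  · have h2 : 0 < φ' t / t ^ (q-1) :=
      lt_of_lt_of_le (div_pos hs' (Real.rpow_pos_of_pos hs _)) (hdec t s ht h)
    have := mul_pos h2 (Real.rpow_pos_of_pos ht (q-1))
    rwa [div_mul_cancel₀] at this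
    exact (Real.rpow_pos_of_pos ht _).ne'

lemma phi_pos (hφ0 : φ 0 = 0)
    (hderiv : ∀ t : ℝ, 0 ≤ t → HasDerivWithinAt φ (φ' t) (Set.Ici 0) t)
    (hcont : ContinuousOn φ' (Set.Ici 0))
    (hmono : ∀ u v : ℝ, 0 ≤ u → u ≤ v → φ' u ≤ φ' v)
    (hφ'0 : φ' 0 = 0)
    (hpos : ∀ t : ℝ, 0 < t → 0 < φ' t)
    {x : ℝ} (hx : 0 < x) : 0 < φ x := by
  have h2 : (0:ℝ) < x/2 := by linarith
  have hA : φ (x/2) - φ 0 = ∫ u in (0:ℝ)..(x/2), φ' u := (ftc hderiv hcont le_rfl h2.le).symm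
  have hB : φ x - φ (x/2) = ∫ u in (x/2)..x, φ' u := (ftc hderiv hcont h2.le (by linarith)).symm
  have hAnn : 0 ≤ ∫ u in (0:ℝ)..(x/2), φ' u := by
    apply intervalIntegral.integral_nonneg h2.le
    intro u hu
    rcases eq_or_lt_of_le hu.1 with rfl | h
    · exact le_of_eq hφ'0.symm
    · exact (hpos u h).le
  have hBp : x/2 * φ' (x/2) ≤ ∫ u in (x/2)..x, φ' u := by
    have hc : ∫ u in (x/2)..x, φ' (x/2) = (x - x/2) * φ' (x/2) := by
      simp [intervalIntegral.integral_const, smul_eq_mul]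
    rw [show x/2 * φ' (x/2) = (x - x/2) * φ' (x/2) by ring, ← hc]
    apply integral_mono_on (by linarith) intervalIntegrable_const
    · apply (hcont.mono ?_).intervalIntegrable
      rw [uIcc_of_le (by linarith : x/2 ≤ x)]
      exact fun y hy => le_trans h2.le hy.1
    · intro u hu
      exact hmono (x/2) u h2.le hu.1
  have := hpos (x/2) h2
  nlinarith [hAnn, hBp, hA, hB]



theorem nondeg (p q : ℝ) (hp : 1 < p) (hpq : p ≤ q)
    (σ : ℕ → ℝ) (hσpos : ∀ j, 0 < σ j)
    (φ φ' : ℝ → ℝ) (hφ0 : φ 0 = 0)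
    (hderiv : ∀ t : ℝ, 0 ≤ t → HasDerivWithinAt φ (φ' t) (Set.Ici 0) t)
    (hcont : ContinuousOn φ' (Set.Ici 0))
    (hinc : ∀ s t : ℝ, 0 < s → s ≤ t → φ' s / s ^ (p-1) ≤ φ' t / t ^ (p-1))
    (hdec : ∀ s t : ℝ, 0 < s → s ≤ t → φ' t / t ^ (q-1) ≤ φ' s / s ^ (q-1))
    (hmono : ∀ u v : ℝ, 0 ≤ u → u ≤ v → φ' u ≤ φ' v)
    (hφ'0 : φ' 0 = 0)
    (hpos : ∀ t : ℝ, 0 < t → 0 < φ' t) :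
    ∃ k : ℕ → ℕ, StrictMono k ∧ ∃ φinf φinf' : ℝ → ℝ,
      ConvexOn ℝ (Set.Ici 0) φinf ∧
      (∀ t : ℝ, 0 ≤ t → HasDerivWithinAt φinf (φinf' t) (Set.Ici 0) t) ∧
      ContinuousOn φinf' (Set.Ici 0) ∧
      (∀ s t : ℝ, 0 < s → s ≤ t → φinf' s / s ^ (p-1) ≤ φinf' t / t ^ (p-1)) ∧
      (∀ s t : ℝ, 0 < s → s ≤ t → φinf' t / t ^ (q-1) ≤ φinf' s / s ^ (q-1)) ∧
      ∀ K : Set ℝ, IsCompact K → K ⊆ Set.Ici 0 →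
        TendstoUniformlyOn (fun n t => φ (t * σ (k n)) / φ (σ (k n))) φinf
          Filter.atTop K := by
  have ha : (0:ℝ) < p - 1 := by linarith
  have hb : (0:ℝ) < q - 1 := by linarith
  have hab : p - 1 ≤ q - 1 := by linarith
  have hq0 : (0:ℝ) < q := by linarith
  have hφσ : ∀ j, 0 < φ (σ j) := fun j =>
    phi_pos hφ0 hderiv hcont hmono hφ'0 hpos (hσpos j)
  have hnn : ∀ t : ℝ, 0 ≤ t → 0 ≤ φ' t := by
    intro t ht
    rcases eq_or_lt_of_le ht with rfl | h
    · exact le_of_eq hφ'0.symm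
    · exact (hpos t h).le
  -- the rescaled derivatives
  have hD0 : ∀ j, σ j / φ (σ j) * φ' (0 * σ j) = 0 := by
    intro j; rw [zero_mul, hφ'0, mul_zero]
  have hDnn : ∀ j (t : ℝ), 0 ≤ t → 0 ≤ σ j / φ (σ j) * φ' (t * σ j) := by
    intro j t ht
    exact mul_nonneg (div_nonneg (hσpos j).le (hφσ j).le)
      (hnn _ (mul_nonneg ht (hσpos j).le))
  have hDmono : ∀ j, ∀ s t : ℝ, 0 ≤ s → s ≤ t →
      σ j / φ (σ j) * φ' (s * σ j) ≤ σ j / φ (σ j) * φ' (t * σ j) := by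
    intro j s t hs hst
    exact mul_le_mul_of_nonneg_left
      (hmono _ _ (mul_nonneg hs (hσpos j).le) (mul_le_mul_of_nonneg_right hst (hσpos j).le))
      (div_nonneg (hσpos j).le (hφσ j).le)
  have hDinc : ∀ j, ∀ s t : ℝ, 0 < s → s ≤ t →
      (σ j / φ (σ j) * φ' (s * σ j)) / s ^ (p-1) ≤
      (σ j / φ (σ j) * φ' (t * σ j)) / t ^ (p-1) := by
    intro j s t hs hst
    have htpos : 0 < t := lt_of_lt_of_le hs hst
    have hA := hσpos j
    have hAa : (0:ℝ) < (σ j) ^ (p-1) := Real.rpow_pos_of_pos hA _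
    have h := hinc (s * σ j) (t * σ j) (mul_pos hs hA)
      (mul_le_mul_of_nonneg_right hst hA.le)
    rw [Real.mul_rpow hs.le hA.le, Real.mul_rpow htpos.le hA.le,
      ← div_div, ← div_div] at h
    have h2 : φ' (s * σ j) / s ^ (p-1) ≤ φ' (t * σ j) / t ^ (p-1) := by
      have := mul_le_mul_of_nonneg_right h hAa.le
      rwa [div_mul_cancel₀ _ hAa.ne', div_mul_cancel₀ _ hAa.ne'] at this
    rw [mul_div_assoc, mul_div_assoc]
    exact mul_le_mul_of_nonneg_left h2 (div_nonneg hA.le (hφσ j).le)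
  have hDdec : ∀ j, ∀ s t : ℝ, 0 < s → s ≤ t →
      (σ j / φ (σ j) * φ' (t * σ j)) / t ^ (q-1) ≤
      (σ j / φ (σ j) * φ' (s * σ j)) / s ^ (q-1) := by
    intro j s t hs hst
    have htpos : 0 < t := lt_of_lt_of_le hs hst
    have hA := hσpos j
    have hAb : (0:ℝ) < (σ j) ^ (q-1) := Real.rpow_pos_of_pos hA _
    have h := hdec (s * σ j) (t * σ j) (mul_pos hs hA)
      (mul_le_mul_of_nonneg_right hst hA.le)
    rw [Real.mul_rpow hs.le hA.le, Real.mul_rpow htpos.le hA.le,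
      ← div_div, ← div_div] at h
    have h2 : φ' (t * σ j) / t ^ (q-1) ≤ φ' (s * σ j) / s ^ (q-1) := by
      have := mul_le_mul_of_nonneg_right h hAb.le
      rwa [div_mul_cancel₀ _ hAb.ne', div_mul_cancel₀ _ hAb.ne'] at this
    rw [mul_div_assoc, mul_div_assoc]
    exact mul_le_mul_of_nonneg_left h2 (div_nonneg hA.le (hφσ j).le)
  have hkey : ∀ j, σ j * φ' (σ j) ≤ q * φ (σ j) := fun j =>
    key_bound hp hpq hφ0 hderiv hcont hdec hφ'0 (hσpos j)
  have hDbound : ∀ j (t : ℝ), 0 ≤ t →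
      σ j / φ (σ j) * φ' (t * σ j) ≤ q * (t ^ (p-1) + t ^ (q-1)) := by
    intro j t ht
    rcases eq_or_lt_of_le ht with rfl | ht0
    · rw [hD0 j, Real.zero_rpow ha.ne', Real.zero_rpow hb.ne']
      norm_num
    · have hA := hσpos j
      have hφ := hφσ j
      have hta : (0:ℝ) ≤ t ^ (p-1) := Real.rpow_nonneg ht0.le _
      have htb : (0:ℝ) ≤ t ^ (q-1) := Real.rpow_nonneg ht0.le _
      have hmain : ∀ e : ℝ, φ' (t * σ j) ≤ φ' (σ j) * t ^ e →
          σ j / φ (σ j) * φ' (t * σ j) ≤ q * t ^ e := by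
        intro e h2
        have hte : (0:ℝ) ≤ t ^ e := Real.rpow_nonneg ht0.le _
        rw [div_mul_eq_mul_div, div_le_iff₀ hφ]
        calc σ j * φ' (t * σ j) ≤ σ j * (φ' (σ j) * t ^ e) :=
              mul_le_mul_of_nonneg_left h2 hA.le
          _ = (σ j * φ' (σ j)) * t ^ e := by ring
          _ ≤ (q * φ (σ j)) * t ^ e := mul_le_mul_of_nonneg_right (hkey j) hte
          _ = q * t ^ e * φ (σ j) := by ring
      rcases le_total t 1 with h1 | h1
      · have h := hinc (t * σ j) (σ j) (mul_pos ht0 hA) (by nlinarith)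
        have hσa : (0:ℝ) < (σ j) ^ (p-1) := Real.rpow_pos_of_pos hA _
        have h2 : φ' (t * σ j) ≤ φ' (σ j) * t ^ (p-1) := by
          rw [div_le_div_iff₀ (Real.rpow_pos_of_pos (mul_pos ht0 hA) _) hσa,
            Real.mul_rpow ht0.le hA.le] at h
          have := le_of_mul_le_mul_right (by nlinarith [h] :
            φ' (t * σ j) * (σ j) ^ (p-1) ≤ (φ' (σ j) * t ^ (p-1)) * (σ j) ^ (p-1)) hσa
          exact this
        have := hmain (p-1) h2
        nlinarith [this]
      · have h := hdec (σ j) (t * σ j) hA (by nlinarith)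
        have hσb : (0:ℝ) < (σ j) ^ (q-1) := Real.rpow_pos_of_pos hA _
        have h2 : φ' (t * σ j) ≤ φ' (σ j) * t ^ (q-1) := by
          rw [div_le_div_iff₀ (Real.rpow_pos_of_pos (mul_pos ht0 hA) _) hσb,
            Real.mul_rpow ht0.le hA.le] at h
          have := le_of_mul_le_mul_right (by nlinarith [h] :
            φ' (t * σ j) * (σ j) ^ (q-1) ≤ (φ' (σ j) * t ^ (q-1)) * (σ j) ^ (q-1)) hσb
          exact this
        have := hmain (q-1) h2
        nlinarith [this]
  -- compactness extraction on rationals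
  have hboxmem : ∀ j, (fun r : ℚ => σ j / φ (σ j) * φ' (max (r:ℝ) 0 * σ j)) ∈
      Set.pi Set.univ (fun r : ℚ =>
        Icc (0:ℝ) (q * ((max (r:ℝ) 0) ^ (p-1) + (max (r:ℝ) 0) ^ (q-1)))) := by
    intro j r _
    exact ⟨hDnn j _ (le_max_right _ _), hDbound j _ (le_max_right _ _)⟩
  obtain ⟨L, hLmem, k, hk, hktends⟩ :=
    (isCompact_univ_pi fun r : ℚ => isCompact_Icc).tendsto_subseq hboxmem
  have hL : ∀ r : ℚ, Tendsto (fun n => σ (k n) / φ (σ (k n)) * φ' (max (r:ℝ) 0 * σ (k n)))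
      atTop (𝓝 (L r)) := by
    rw [tendsto_pi_nhds] at hktends
    exact fun r => hktends r
  have hLpos : ∀ r : ℚ, 0 < (r:ℝ) →
      Tendsto (fun n => σ (k n) / φ (σ (k n)) * φ' ((r:ℝ) * σ (k n))) atTop (𝓝 (L r)) := by
    intro r hr
    simpa [max_eq_left hr.le] using hL r
  have hLnn : ∀ r : ℚ, 0 ≤ L r := by
    intro r
    exact le_of_tendsto_of_tendsto' tendsto_const_nhds (hL r)
      (fun n => hDnn (k n) _ (le_max_right _ _))
  have hLmono : ∀ r r' : ℚ, 0 < (r:ℝ) → (r:ℝ) ≤ (r':ℝ) → L r ≤ L r' := by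
    intro r r' hr hrr
    exact le_of_tendsto_of_tendsto' (hLpos r hr) (hLpos r' (lt_of_lt_of_le hr hrr))
      (fun n => hDmono (k n) _ _ hr.le hrr)
  have hLinc : ∀ r r' : ℚ, 0 < (r:ℝ) → (r:ℝ) ≤ (r':ℝ) →
      L r / (r:ℝ) ^ (p-1) ≤ L r' / (r':ℝ) ^ (p-1) := by
    intro r r' hr hrr
    exact le_of_tendsto_of_tendsto' ((hLpos r hr).div_const _)
      ((hLpos r' (lt_of_lt_of_le hr hrr)).div_const _)
      (fun n => hDinc (k n) _ _ hr hrr)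
  have hLdec : ∀ r r' : ℚ, 0 < (r:ℝ) → (r:ℝ) ≤ (r':ℝ) →
      L r' / (r':ℝ) ^ (q-1) ≤ L r / (r:ℝ) ^ (q-1) := by
    intro r r' hr hrr
    exact le_of_tendsto_of_tendsto' ((hLpos r' (lt_of_lt_of_le hr hrr)).div_const _)
      ((hLpos r hr).div_const _)
      (fun n => hDdec (k n) _ _ hr hrr)
  have hLleB : ∀ r : ℚ, 0 < (r:ℝ) → L r ≤ q * ((r:ℝ) ^ (p-1) + (r:ℝ) ^ (q-1)) := by
    intro r hr
    exact le_of_tendsto_of_tendsto' (hLpos r hr) tendsto_const_nhds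
      (fun n => hDbound (k n) _ hr.le)
  -- the limit derivative
  haveI hne : ∀ t : ℝ, Nonempty {r : ℚ // t < (r:ℝ)} := by
    intro t
    obtain ⟨r, hr⟩ := exists_rat_gt t
    exact ⟨⟨r, hr⟩⟩
  set g : ℝ → ℝ := fun t => ⨅ r : {r : ℚ // t < (r:ℝ)}, L r.1 with hgdef
  have hbdd : ∀ t : ℝ, BddBelow (Set.range fun r : {r : ℚ // t < (r:ℝ)} => L r.1) := by
    intro t
    refine ⟨0, ?_⟩
    rintro x ⟨r, rfl⟩
    exact hLnn r.1
  have hgle : ∀ (t : ℝ) (r : ℚ), t < (r:ℝ) → g t ≤ L r := by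
    intro t r hr
    exact ciInf_le (hbdd t) ⟨r, hr⟩
  have hgnn : ∀ t : ℝ, 0 ≤ g t := by
    intro t
    exact le_ciInf fun r => hLnn r.1
  have hgmono : Monotone g := by
    intro s t hst
    exact le_ciInf fun r => hgle s r.1 (lt_of_le_of_lt hst r.2)
  have hBmono : ∀ u v : ℝ, 0 ≤ u → u ≤ v →
      q * (u ^ (p-1) + u ^ (q-1)) ≤ q * (v ^ (p-1) + v ^ (q-1)) := by
    intro u v hu huv
    exact mul_le_mul_of_nonneg_left
      (add_le_add (Real.rpow_le_rpow hu huv ha.le) (Real.rpow_le_rpow hu huv hb.le)) hq0.le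
  have hgleB : ∀ t : ℝ, 0 ≤ t → g t ≤ q * (t ^ (p-1) + t ^ (q-1)) := by
    intro t ht
    by_contra hlt
    push_neg at hlt
    have hBcont : ContinuousAt (fun x : ℝ => q * (x ^ (p-1) + x ^ (q-1))) t :=
      continuousAt_const.mul ((Real.continuousAt_rpow_const t _ (Or.inr ha.le)).add
        (Real.continuousAt_rpow_const t _ (Or.inr hb.le)))
    have hev : ∀ᶠ x in 𝓝[>] t, q * (x ^ (p-1) + x ^ (q-1)) < g t :=
      (hBcont.tendsto.mono_left nhdsWithin_le_nhds).eventually_lt_const hlt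
    obtain ⟨x, hx1, hx2⟩ := (hev.and self_mem_nhdsWithin).exists
    obtain ⟨r, hr1, hr2⟩ := exists_rat_btwn (hx2 : t < x)
    have hr0 : 0 < (r:ℝ) := lt_of_le_of_lt ht hr1
    have h1 := hgle t r hr1
    have h2 := hLleB r hr0
    have h3 := hBmono (r:ℝ) x hr0.le hr2.le
    linarith
  have hg0 : g 0 = 0 := by
    have h1 := hgleB 0 le_rfl
    rw [Real.zero_rpow ha.ne', Real.zero_rpow hb.ne'] at h1
    have h2 := hgnn 0
    linarith
  have hg_dec : ∀ s t : ℝ, 0 < s → s ≤ t → g t / t ^ (q-1) ≤ g s / s ^ (q-1) := by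
    intro s t hs hst
    have ht : 0 < t := lt_of_lt_of_le hs hst
    have hsb : (0:ℝ) < s ^ (q-1) := Real.rpow_pos_of_pos hs _
    have htb : (0:ℝ) < t ^ (q-1) := Real.rpow_pos_of_pos ht _
    rw [div_le_div_iff₀ htb hsb]
    have key : ∀ r : {r : ℚ // s < (r:ℝ)}, g t * s ^ (q-1) / t ^ (q-1) ≤ L r.1 := by
      rintro ⟨r, hr⟩
      have hr0 : 0 < (r:ℝ) := hs.trans hr
      have htr : t < t * r / s := by
        rw [lt_div_iff₀ hs]
        nlinarith
      obtain ⟨r'', h1, h2⟩ := exists_rat_btwn htr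
      have hr''0 : 0 < (r'':ℝ) := ht.trans h1
      have hts1 : (1:ℝ) ≤ t / s := (one_le_div hs).2 hst
      have hfac1 : (1:ℝ) ≤ (t/s) ^ (q-1) := by
        calc (1:ℝ) = 1 ^ (q-1) := (Real.one_rpow _).symm
          _ ≤ (t/s) ^ (q-1) := Real.rpow_le_rpow zero_le_one hts1 hb.le
      have hcase : L r'' ≤ L r * (t/s) ^ (q-1) := by
        rcases le_total (r'':ℝ) (r:ℝ) with hc | hc
        · calc L r'' ≤ L r := hLmono r'' r hr''0 hc
            _ = L r * 1 := (mul_one _).symm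
            _ ≤ L r * (t/s) ^ (q-1) := mul_le_mul_of_nonneg_left hfac1 (hLnn r)
        · have h3 := hLdec r r'' hr0 hc
          have hrb : (0:ℝ) < (r:ℝ) ^ (q-1) := Real.rpow_pos_of_pos hr0 _
          have hr''b : (0:ℝ) < (r'':ℝ) ^ (q-1) := Real.rpow_pos_of_pos hr''0 _
          rw [div_le_div_iff₀ hr''b hrb] at h3
          have h4 : ((r'':ℝ)) ^ (q-1) ≤ (t/s) ^ (q-1) * (r:ℝ) ^ (q-1) := by
            have h5 : ((r'':ℝ)) ≤ t/s * (r:ℝ) := by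
              rw [div_mul_eq_mul_div]
              exact h2.le
            calc ((r'':ℝ)) ^ (q-1) ≤ (t/s * (r:ℝ)) ^ (q-1) :=
                  Real.rpow_le_rpow hr''0.le h5 hb.le
              _ = (t/s) ^ (q-1) * (r:ℝ) ^ (q-1) :=
                  Real.mul_rpow (by positivity) hr0.le
          have h5 : L r'' * (r:ℝ) ^ (q-1) ≤ (L r * (t/s) ^ (q-1)) * (r:ℝ) ^ (q-1) := by
            calc L r'' * (r:ℝ) ^ (q-1) ≤ L r * (r'':ℝ) ^ (q-1) := h3
              _ ≤ L r * ((t/s) ^ (q-1) * (r:ℝ) ^ (q-1)) :=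
                  mul_le_mul_of_nonneg_left h4 (hLnn r)
              _ = (L r * (t/s) ^ (q-1)) * (r:ℝ) ^ (q-1) := by ring
          exact le_of_mul_le_mul_right h5 hrb
      have h6 : g t ≤ L r * (t/s) ^ (q-1) := (hgle t r'' h1).trans hcase
      rw [Real.div_rpow ht.le hs.le] at h6
      rw [div_le_iff₀ htb]
      calc g t * s ^ (q-1) ≤ (L r * (t ^ (q-1) / s ^ (q-1))) * s ^ (q-1) :=
            mul_le_mul_of_nonneg_right h6 hsb.le
        _ = L r * t ^ (q-1) := by field_simp
    have h7 : g t * s ^ (q-1) / t ^ (q-1) ≤ g s := le_ciInf key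
    rw [div_le_iff₀ htb] at h7
    linarith
  have hg_inc : ∀ s t : ℝ, 0 < s → s ≤ t → g s / s ^ (p-1) ≤ g t / t ^ (p-1) := by
    intro s t hs hst
    have ht : 0 < t := lt_of_lt_of_le hs hst
    have hsa : (0:ℝ) < s ^ (p-1) := Real.rpow_pos_of_pos hs _
    have hta : (0:ℝ) < t ^ (p-1) := Real.rpow_pos_of_pos ht _
    rw [div_le_div_iff₀ hsa hta]
    have key : ∀ r' : {r : ℚ // t < (r:ℝ)}, g s * t ^ (p-1) / s ^ (p-1) ≤ L r'.1 := by
      rintro ⟨r', hr'⟩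
      have hr'0 : 0 < (r':ℝ) := ht.trans hr'
      have hsr : s < s * r' / t := by
        rw [lt_div_iff₀ ht]
        nlinarith
      obtain ⟨r, h1, h2⟩ := exists_rat_btwn hsr
      have hr0 : 0 < (r:ℝ) := hs.trans h1
      have hrr' : (r:ℝ) ≤ (r':ℝ) := by
        have h3 : s * r' / t ≤ r' := by
          rw [div_le_iff₀ ht]
          nlinarith
        exact h2.le.trans h3
      have h3 := hLinc r r' hr0 hrr'
      have hra : (0:ℝ) < (r:ℝ) ^ (p-1) := Real.rpow_pos_of_pos hr0 _
      have hr'a : (0:ℝ) < (r':ℝ) ^ (p-1) := Real.rpow_pos_of_pos hr'0 _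
      rw [div_le_div_iff₀ hra hr'a] at h3
      have h4 : (r:ℝ) ^ (p-1) ≤ (s/t) ^ (p-1) * (r':ℝ) ^ (p-1) := by
        have h5 : (r:ℝ) ≤ s/t * (r':ℝ) := by
          rw [div_mul_eq_mul_div]
          exact h2.le
        calc (r:ℝ) ^ (p-1) ≤ (s/t * (r':ℝ)) ^ (p-1) :=
              Real.rpow_le_rpow hr0.le h5 ha.le
          _ = (s/t) ^ (p-1) * (r':ℝ) ^ (p-1) :=
              Real.mul_rpow (by positivity) hr'0.le
      have h6 : L r ≤ L r' * (s/t) ^ (p-1) := by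
        have h5 : L r * (r':ℝ) ^ (p-1) ≤ (L r' * (s/t) ^ (p-1)) * (r':ℝ) ^ (p-1) := by
          calc L r * (r':ℝ) ^ (p-1) ≤ L r' * (r:ℝ) ^ (p-1) := h3
            _ ≤ L r' * ((s/t) ^ (p-1) * (r':ℝ) ^ (p-1)) :=
                mul_le_mul_of_nonneg_left h4 (hLnn r')
            _ = (L r' * (s/t) ^ (p-1)) * (r':ℝ) ^ (p-1) := by ring
        exact le_of_mul_le_mul_right h5 hr'a
      have h7 : g s ≤ L r' * (s/t) ^ (p-1) := (hgle s r h1).trans h6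
      rw [Real.div_rpow hs.le ht.le] at h7
      rw [div_le_iff₀ hsa]
      calc g s * t ^ (p-1) ≤ (L r' * (s ^ (p-1) / t ^ (p-1))) * t ^ (p-1) :=
            mul_le_mul_of_nonneg_right h7 hta.le
        _ = L r' * s ^ (p-1) := by field_simp
    have h8 : g s * t ^ (p-1) / s ^ (p-1) ≤ g t := le_ciInf key
    rw [div_le_iff₀ hsa] at h8
    linarith
  -- continuity of g
  have hgcontAt : ∀ t : ℝ, 0 < t → ContinuousAt g t := by
    intro t ht
    have htb : (0:ℝ) < t ^ (q-1) := Real.rpow_pos_of_pos ht _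
    have hUcont : ContinuousAt (fun x : ℝ => g t * x ^ (q-1) / t ^ (q-1)) t :=
      (continuousAt_const.mul (Real.continuousAt_rpow_const t _ (Or.inr hb.le))).div_const _
    have hUval : g t * t ^ (q-1) / t ^ (q-1) = g t := by field_simp
    have hlow : Tendsto (fun x : ℝ => min (g t) (g t * x ^ (q-1) / t ^ (q-1))) (𝓝 t)
        (𝓝 (g t)) := by
      have := (tendsto_const_nhds (x := g t) (f := 𝓝 t)).min hUcont.tendsto
      rwa [hUval, min_self] at this
    have hup : Tendsto (fun x : ℝ => max (g t) (g t * x ^ (q-1) / t ^ (q-1))) (𝓝 t)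
        (𝓝 (g t)) := by
      have := (tendsto_const_nhds (x := g t) (f := 𝓝 t)).max hUcont.tendsto
      rwa [hUval, max_self] at this
    apply tendsto_of_tendsto_of_tendsto_of_le_of_le' hlow hup
    · filter_upwards [eventually_gt_nhds ht] with x hx
      rcases le_total x t with hc | hc
      · refine le_trans (min_le_right _ _) ?_
        have h1 := hg_dec x t hx hc
        rw [div_le_div_iff₀ htb (Real.rpow_pos_of_pos hx _)] at h1
        rw [div_le_iff₀ htb]
        linarith
      · exact le_trans (min_le_left _ _) (hgmono hc)
    · filter_upwards [eventually_gt_nhds ht] with x hx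
      rcases le_total x t with hc | hc
      · exact le_trans (hgmono hc) (le_max_left _ _)
      · refine le_trans ?_ (le_max_right _ _)
        have h1 := hg_dec t x ht hc
        rw [div_le_div_iff₀ (Real.rpow_pos_of_pos hx _) htb] at h1
        rw [le_div_iff₀ htb]
        linarith
  have hgcont : ContinuousOn g (Set.Ici 0) := by
    intro t ht
    rcases eq_or_lt_of_le (mem_Ici.mp ht : (0:ℝ) ≤ t) with rfl | ht0
    · have hBt : Tendsto (fun x : ℝ => q * (x ^ (p-1) + x ^ (q-1))) (𝓝[Set.Ici 0] 0)
          (𝓝 0) := by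
        have hBcont : ContinuousAt (fun x : ℝ => q * (x ^ (p-1) + x ^ (q-1))) 0 :=
          continuousAt_const.mul ((Real.continuousAt_rpow_const 0 _ (Or.inr ha.le)).add
            (Real.continuousAt_rpow_const 0 _ (Or.inr hb.le)))
        have := hBcont.tendsto.mono_left (nhdsWithin_le_nhds (s := Set.Ici (0:ℝ)))
        simpa [Real.zero_rpow ha.ne', Real.zero_rpow hb.ne'] using this
      have : Tendsto g (𝓝[Set.Ici 0] 0) (𝓝 0) := by
        apply tendsto_of_tendsto_of_tendsto_of_le_of_le' tendsto_const_nhds hBt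
        · exact Eventually.of_forall fun x => hgnn x
        · filter_upwards [self_mem_nhdsWithin] with x hx
          exact hgleB x hx
      unfold ContinuousWithinAt
      rwa [hg0]
    · exact (hgcontAt t ht0).continuousWithinAt
  -- pointwise convergence of the rescaled derivatives to g
  have hDtendsto : ∀ t : ℝ, 0 ≤ t →
      Tendsto (fun n => σ (k n) / φ (σ (k n)) * φ' (t * σ (k n))) atTop (𝓝 (g t)) := by
    intro t ht
    rcases eq_or_lt_of_le ht with rfl | ht0
    · rw [hg0]
      have : (fun n => σ (k n) / φ (σ (k n)) * φ' (0 * σ (k n))) = fun _ => (0:ℝ) := by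
        funext n
        exact hD0 (k n)
      rw [this]
      exact tendsto_const_nhds
    · rw [tendsto_order]
      constructor
      · intro c hc
        have hT : Tendsto g (𝓝[<] t) (𝓝 (g t)) :=
          (hgcontAt t ht0).tendsto.mono_left nhdsWithin_le_nhds
        have h1 : ∀ᶠ x in 𝓝[<] t, c < g x := hT.eventually_const_lt hc
        have h2 : ∀ᶠ x in 𝓝[<] t, 0 < x :=
          eventually_nhdsWithin_of_eventually_nhds (eventually_gt_nhds ht0)
        obtain ⟨x, hx1, hx2, hx3⟩ := (h1.and (h2.and self_mem_nhdsWithin)).exists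
        obtain ⟨r, hr1, hr2⟩ := exists_rat_btwn (hx3 : x < t)
        have hr0 : 0 < (r:ℝ) := hx2.trans hr1
        have hcL : c < L r := lt_of_lt_of_le hx1 (hgle x r hr1)
        filter_upwards [(hLpos r hr0).eventually_const_lt hcL] with n hn
        exact lt_of_lt_of_le hn (hDmono (k n) _ _ hr0.le hr2.le)
      · intro c hc
        haveI := hne t
        obtain ⟨⟨r, hrt⟩, hLr⟩ := exists_lt_of_ciInf_lt (hc : g t < c)
        have hr0 : 0 < (r:ℝ) := ht0.trans hrt
        filter_upwards [(hLpos r hr0).eventually_lt_const hLr] with n hn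
        exact lt_of_le_of_lt (hDmono (k n) _ _ ht0.le hrt.le) hn
  -- integrability
  have hgint : ∀ R : ℝ, 0 ≤ R → IntervalIntegrable g volume 0 R := by
    intro R hR
    apply (hgcont.mono ?_).intervalIntegrable
    rw [uIcc_of_le hR]
    exact fun y hy => hy.1
  have hDcont : ∀ j, ContinuousOn (fun t : ℝ => σ j / φ (σ j) * φ' (t * σ j)) (Set.Ici 0) := by
    intro j
    apply continuousOn_const.mul
    exact hcont.comp ((continuous_id.mul continuous_const).continuousOn)
      (fun x (hx : x ∈ Set.Ici (0:ℝ)) => mul_nonneg hx (hσpos j).le)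
  have hDint : ∀ j (R : ℝ), 0 ≤ R →
      IntervalIntegrable (fun t : ℝ => σ j / φ (σ j) * φ' (t * σ j)) volume 0 R := by
    intro j R hR
    apply ((hDcont j).mono ?_).intervalIntegrable
    rw [uIcc_of_le hR]
    exact fun y hy => hy.1
  have hBint : ∀ R : ℝ, 0 ≤ R →
      IntervalIntegrable (fun t : ℝ => 2 * (q * (t ^ (p-1) + t ^ (q-1)))) volume 0 R := by
    intro R hR
    exact (((intervalIntegrable_rpow (Or.inl ha.le)).add
      (intervalIntegrable_rpow (Or.inl hb.le))).const_mul q).const_mul 2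
  -- derivative and FTC for the rescaled functions
  have hΨderiv : ∀ j (t : ℝ), 0 ≤ t → HasDerivWithinAt (fun u => φ (u * σ j) / φ (σ j))
      (σ j / φ (σ j) * φ' (t * σ j)) (Set.Ici 0) t := by
    intro j t ht
    have hlin : HasDerivWithinAt (fun u : ℝ => u * σ j) (σ j) (Set.Ici 0) t :=
      (hasDerivAt_mul_const (σ j)).hasDerivWithinAt
    have hout := hderiv (t * σ j) (mul_nonneg ht (hσpos j).le)
    have hcomp := HasDerivWithinAt.comp t hout hlin
      (fun u (hu : u ∈ Set.Ici (0:ℝ)) => mul_nonneg hu (hσpos j).le)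
    have h2 := hcomp.div_const (φ (σ j))
    have heq : σ j / φ (σ j) * φ' (t * σ j) = φ' (t * σ j) * σ j / φ (σ j) := by ring
    rw [heq]
    exact h2
  have hΨftc : ∀ j (t : ℝ), 0 ≤ t →
      ∫ x in (0:ℝ)..t, σ j / φ (σ j) * φ' (x * σ j) = φ (t * σ j) / φ (σ j) := by
    intro j t ht
    have h := integral_eq_sub_of_hasDeriv_right_of_le ht
      (f := fun u => φ (u * σ j) / φ (σ j))
      (f' := fun x => σ j / φ (σ j) * φ' (x * σ j)) ?_ ?_ (hDint j t ht)
    · rw [h]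
      simp [hφ0]
    · intro x hx
      exact ((hΨderiv j x hx.1).continuousWithinAt).mono (fun y hy => hy.1)
    · intro x hx
      exact (hΨderiv j x hx.1.le).mono
        (fun y (hy : x < y) => le_of_lt (lt_of_le_of_lt hx.1.le hy))
  -- derivative of the limit function
  have hφD : ∀ x : ℝ, 0 < x →
      HasDerivAt (fun t => ∫ u in (0:ℝ)..t, g u) (g x) x := by
    intro x hx
    apply intervalIntegral.integral_hasDerivAt_right (hgint x hx.le) ?_ (hgcontAt x hx)
    exact ContinuousOn.stronglyMeasurableAtFilter isOpen_Ioi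
      (fun y hy => (hgcontAt y hy).continuousWithinAt) x hx
  have hφDW : ∀ t : ℝ, 0 ≤ t →
      HasDerivWithinAt (fun t => ∫ u in (0:ℝ)..t, g u) (g t) (Set.Ici 0) t := by
    intro t ht
    rcases eq_or_lt_of_le ht with rfl | ht0
    · apply intervalIntegral.integral_hasDerivWithinAt_right (hgint 0 le_rfl)
        ((continuousOn_of_forall_continuousAt
          (fun y (hy : y ∈ Set.Ioi (0:ℝ)) => hgcontAt y hy)).stronglyMeasurableAtFilter_nhdsWithin
          measurableSet_Ioi 0)
        ((hgcont 0 (mem_Ici.2 le_rfl)).mono Ioi_subset_Ici_self)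
    · exact (hφD t ht0).hasDerivWithinAt
  have hφinfcont : ContinuousOn (fun t => ∫ u in (0:ℝ)..t, g u) (Set.Ici 0) :=
    fun t ht => (hφDW t ht).continuousWithinAt
  have hconvex : ConvexOn ℝ (Set.Ici 0) (fun t => ∫ u in (0:ℝ)..t, g u) := by
    apply MonotoneOn.convexOn_of_deriv (convex_Ici 0) hφinfcont
    · intro x hx
      rw [interior_Ici] at hx
      exact (hφD x hx).differentiableAt.differentiableWithinAt
    · intro x hx y hy hxy
      rw [interior_Ici] at hx hy
      rw [(hφD x hx).deriv, (hφD y hy).deriv]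
      exact hgmono hxy
  refine ⟨k, hk, fun t => ∫ u in (0:ℝ)..t, g u, g, hconvex, hφDW, hgcont, hg_inc, hg_dec, ?_⟩
  intro K hK hKsub
  rcases K.eq_empty_or_nonempty with rfl | hKne
  · exact tendstoUniformlyOn_empty
  obtain ⟨R0, hR0⟩ := hK.bddAbove
  set R : ℝ := max R0 0 with hRdef
  have hRnn : (0:ℝ) ≤ R := le_max_right _ _
  have hRK : ∀ x ∈ K, x ≤ R := fun x hx => le_trans (hR0 hx) (le_max_left _ _)
  have hErr : Tendsto (fun n => ∫ x in (0:ℝ)..R,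
      |σ (k n) / φ (σ (k n)) * φ' (x * σ (k n)) - g x|) atTop (𝓝 0) := by
    have h0 : Tendsto (fun n => ∫ x in (0:ℝ)..R,
        |σ (k n) / φ (σ (k n)) * φ' (x * σ (k n)) - g x|) atTop
        (𝓝 (∫ x in (0:ℝ)..R, (0:ℝ))) := by
      apply intervalIntegral.tendsto_integral_filter_of_dominated_convergence
        (fun t : ℝ => 2 * (q * (t ^ (p-1) + t ^ (q-1))))
      · apply Eventually.of_forall
        intro n
        apply ContinuousOn.aestronglyMeasurable ?_ measurableSet_uIoc
        apply ContinuousOn.abs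
        apply ContinuousOn.sub ((hDcont (k n)).mono ?_) (hgcont.mono ?_)
        · rw [uIoc_of_le hRnn]
          exact fun y hy => hy.1.le
        · rw [uIoc_of_le hRnn]
          exact fun y hy => hy.1.le
      · apply Eventually.of_forall
        intro n
        apply MeasureTheory.ae_of_all
        intro x hx
        rw [uIoc_of_le hRnn] at hx
        have hx0 : 0 < x := hx.1
        rw [Real.norm_eq_abs, abs_abs]
        have h1 : |σ (k n) / φ (σ (k n)) * φ' (x * σ (k n)) - g x| ≤
            |σ (k n) / φ (σ (k n)) * φ' (x * σ (k n))| + |g x| := abs_sub _ _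
        rw [abs_of_nonneg (hDnn (k n) x hx0.le), abs_of_nonneg (hgnn x)] at h1
        have h2 := hDbound (k n) x hx0.le
        have h3 := hgleB x hx0.le
        linarith
      · exact hBint R hRnn
      · apply MeasureTheory.ae_of_all
        intro x hx
        rw [uIoc_of_le hRnn] at hx
        have := ((hDtendsto x hx.1.le).sub (tendsto_const_nhds (x := g x))).abs
        simpa using this
    simpa using h0
  rw [Metric.tendstoUniformlyOn_iff]
  intro ε hε
  filter_upwards [hErr.eventually_lt_const hε] with n hn
  intro x hx
  have hx0 : (0:ℝ) ≤ x := hKsub hx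
  have hxR : x ≤ R := hRK x hx
  rw [Real.dist_eq]
  have hft := hΨftc (k n) x hx0
  have heq : (∫ u in (0:ℝ)..x, g u) - φ (x * σ (k n)) / φ (σ (k n)) =
      ∫ u in (0:ℝ)..x, (g u - σ (k n) / φ (σ (k n)) * φ' (u * σ (k n))) := by
    rw [intervalIntegral.integral_sub (hgint x hx0) (hDint (k n) x hx0), hft]
  calc |(∫ u in (0:ℝ)..x, g u) - φ (x * σ (k n)) / φ (σ (k n))|
      = |∫ u in (0:ℝ)..x, (g u - σ (k n) / φ (σ (k n)) * φ' (u * σ (k n)))| := by rw [heq]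
    _ ≤ ∫ u in (0:ℝ)..x, |g u - σ (k n) / φ (σ (k n)) * φ' (u * σ (k n))| :=
        abs_integral_le_integral_abs hx0
    _ = ∫ u in (0:ℝ)..x, |σ (k n) / φ (σ (k n)) * φ' (u * σ (k n)) - g u| := by
        simp_rw [abs_sub_comm]
    _ ≤ ∫ u in (0:ℝ)..R, |σ (k n) / φ (σ (k n)) * φ' (u * σ (k n)) - g u| := by
        apply intervalIntegral.integral_mono_interval le_rfl hx0 hxR
        · exact MeasureTheory.ae_of_all _ (fun y => abs_nonneg _)
        · apply IntervalIntegrable.abs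
          exact (hDint (k n) R hRnn).sub (hgint R hRnn)
    _ < ε := hn

end Stmt12


open Set Filter MeasureTheory intervalIntegral Topology Stmt12 in
/-- Recession-function compactness: the rescalings φ(tσ_j)/φ(σ_j) of a C¹ convex
function with derivative satisfying (inc)_{p-1} and (dec)_{q-1} subconverge locally
uniformly to a C¹ convex limit with the same properties. -/
theorem stmt12 (p q : ℝ) (hp : 1 < p) (hpq : p ≤ q)
    (σ : ℕ → ℝ) (hσpos : ∀ j, 0 < σ j)
    (hσ : Filter.Tendsto σ Filter.atTop Filter.atTop)
    (φ φ' : ℝ → ℝ) (hφ0 : φ 0 = 0)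
    (hconv : ConvexOn ℝ (Set.Ici 0) φ)
    (hderiv : ∀ t : ℝ, 0 ≤ t → HasDerivWithinAt φ (φ' t) (Set.Ici 0) t)
    (hcont : ContinuousOn φ' (Set.Ici 0))
    (hinc : ∀ s t : ℝ, 0 < s → s ≤ t → φ' s / s ^ (p-1) ≤ φ' t / t ^ (p-1))
    (hdec : ∀ s t : ℝ, 0 < s → s ≤ t → φ' t / t ^ (q-1) ≤ φ' s / s ^ (q-1)) :
    ∃ k : ℕ → ℕ, StrictMono k ∧ ∃ φinf φinf' : ℝ → ℝ,
      ConvexOn ℝ (Set.Ici 0) φinf ∧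
      (∀ t : ℝ, 0 ≤ t → HasDerivWithinAt φinf (φinf' t) (Set.Ici 0) t) ∧
      ContinuousOn φinf' (Set.Ici 0) ∧
      (∀ s t : ℝ, 0 < s → s ≤ t → φinf' s / s ^ (p-1) ≤ φinf' t / t ^ (p-1)) ∧
      (∀ s t : ℝ, 0 < s → s ≤ t → φinf' t / t ^ (q-1) ≤ φinf' s / s ^ (q-1)) ∧
      ∀ K : Set ℝ, IsCompact K → K ⊆ Set.Ici 0 →
        TendstoUniformlyOn (fun n t => φ (t * σ (k n)) / φ (σ (k n))) φinf
          Filter.atTop K := by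
  by_cases hdeg : ∀ t : ℝ, 0 < t → φ' t = 0
  · have hφ'0 : φ' 0 = 0 :=
      deriv_zero hp hcont hinc (fun t ht => (hdeg t ht).ge)
    have hzero : ∀ x : ℝ, 0 ≤ x → φ x = 0 := by
      intro x hx
      have h := ftc hderiv hcont le_rfl hx
      have h2 : ∫ y in (0:ℝ)..x, φ' y = 0 := by
        rw [intervalIntegral.integral_congr (g := fun _ => (0:ℝ)) ?_]
        · simp
        · intro y hy
          rw [uIcc_of_le hx] at hy
          rcases eq_or_lt_of_le hy.1 with rfl | hlt
          · exact hφ'0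
          · exact hdeg y hlt
      rw [h2, hφ0] at h
      linarith [h]
    refine ⟨id, strictMono_id, fun _ => 0, fun _ => 0, ?_, ?_, ?_, ?_, ?_, ?_⟩
    · exact convexOn_const 0 (convex_Ici 0)
    · intro t ht
      exact hasDerivWithinAt_const t _ 0
    · exact continuousOn_const
    · intro s t hs hst; simp
    · intro s t hs hst; simp
    · intro K hK hKsub
      rw [Metric.tendstoUniformlyOn_iff]
      intro ε hε
      apply Eventually.of_forall
      intro n x hx
      have hx0 : (0:ℝ) ≤ x := hKsub hx
      rw [Real.dist_eq]
      simp only [id_eq]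
      rw [hzero _ (mul_nonneg hx0 (hσpos n).le), zero_div, sub_zero, abs_zero]
      exact hε
  · push_neg at hdeg
    have hnn : ∀ t : ℝ, 0 < t → 0 ≤ φ' t := fun t ht =>
      deriv_nonneg hp hpq hconv hderiv hdec ht
    have hφ'0 : φ' 0 = 0 := deriv_zero hp hcont hinc hnn
    have hmono : ∀ u v : ℝ, 0 ≤ u → u ≤ v → φ' u ≤ φ' v := fun u v hu huv =>
      deriv_mono hconv hderiv hu huv
    obtain ⟨s, hs, hsne⟩ := hdeg
    have hs' : 0 < φ' s := lt_of_le_of_ne (hnn s hs) (Ne.symm hsne)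
    have hpos : ∀ t : ℝ, 0 < t → 0 < φ' t := fun t ht =>
      deriv_pos hinc hdec hs hs' ht
    exact nondeg p q hp hpq σ hσpos φ φ' hφ0 hderiv hcont hinc hdec hmono hφ'0 hpos
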